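/- Let p > 1 and let A be a real symmetric n×n matrix such that max { |xᵀAx| : ‖x‖_p = 1 } = n^{−2/p} |∑_{i,j} a_{ij}|. Then A has constant row sums. -/

import Mathlib

open Filter Topology

private theorem aux17_exists_gt (f : ℝ → ℝ) (L : ℝ) (hL : 0 < L) (hf : HasDerivAt f L 0) :
    ∃ t : ℝ, 0 < t ∧ t < 1 ∧ f 0 < f t := by
  have hs := hasDerivAt_iff_tendsto_slope.1 hf
  have hmono : 𝓝[>] (0:ℝ) ≤ 𝓝[≠] (0:ℝ) := nhdsWithin_mono _ (fun x hx => ne_of_gt hx)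
  have h2 : ∀ᶠ t in 𝓝[>] (0:ℝ), 0 < slope f 0 t :=
    hmono ((hs.eventually (eventually_gt_nhds hL)))
  have h3 : ∀ᶠ t in 𝓝[>] (0:ℝ), t < 1 :=
    eventually_nhdsWithin_of_eventually_nhds (eventually_lt_nhds zero_lt_one)
  have h4 : ∀ᶠ t in 𝓝[>] (0:ℝ), 0 < t := self_mem_nhdsWithin
  obtain ⟨t, ht⟩ := ((h2.and h3).and h4).exists
  obtain ⟨⟨hslope, ht1⟩, ht0⟩ := ht
  refine ⟨t, ht0, ht1, ?_⟩
  rw [slope_def_field] at hslope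
  have h5 : 0 < (f t - f 0) / (t - 0) := hslope
  rw [sub_zero] at h5
  rcases (div_pos_iff).1 h5 with ⟨h, _⟩ | ⟨_, h⟩
  · linarith
  · linarith

private theorem aux17_bdd (n : ℕ) (p : ℝ) (hp : 1 < p) (A : Matrix (Fin n) (Fin n) ℝ) :
    BddAbove {t : ℝ | ∃ x : Fin n → ℝ, (∑ i, |x i| ^ p) = 1 ∧
        t = |∑ i, ∑ j, A i j * x i * x j|} := by
  refine ⟨∑ i, ∑ j, |A i j|, ?_⟩
  rintro t ⟨x, hx, rfl⟩
  have hxi : ∀ i, |x i| ≤ 1 := by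
    intro i
    by_contra h
    push_neg at h
    have h1 : (1:ℝ) < |x i| ^ p := by
      have := Real.one_lt_rpow_iff_of_pos (y := p) (lt_trans zero_lt_one h)
      exact this.2 (Or.inl ⟨h, lt_trans zero_lt_one hp⟩)
    have h2 : |x i| ^ p ≤ ∑ i, |x i| ^ p :=
      Finset.single_le_sum (fun j _ => Real.rpow_nonneg (abs_nonneg _) p) (Finset.mem_univ i)
    rw [hx] at h2
    linarith
  calc |∑ i, ∑ j, A i j * x i * x j| ≤ ∑ i, |∑ j, A i j * x i * x j| :=
        Finset.abs_sum_le_sum_abs _ _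
    _ ≤ ∑ i, ∑ j, |A i j * x i * x j| :=
        Finset.sum_le_sum fun i _ => Finset.abs_sum_le_sum_abs _ _
    _ ≤ ∑ i, ∑ j, |A i j| := by
        refine Finset.sum_le_sum fun i _ => Finset.sum_le_sum fun j _ => ?_
        rw [abs_mul, abs_mul]
        calc |A i j| * |x i| * |x j| ≤ |A i j| * 1 * 1 := by
              apply mul_le_mul (mul_le_mul le_rfl (hxi i) (abs_nonneg _) (abs_nonneg _))
                (hxi j) (abs_nonneg _) (by positivity)
          _ = |A i j| := by ring

private theorem aux17_quad (n : ℕ) (A : Matrix (Fin n) (Fin n) ℝ) (hsym : A.IsSymm)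
    (a b : Fin n) (hab : a ≠ b) (t : ℝ) :
    ∑ i, ∑ j, A i j * ((if i = a then 1+t else if i = b then 1-t else 1))
      * ((if j = a then 1+t else if j = b then 1-t else 1)) =
    (∑ i, ∑ j, A i j) + 2*t*((∑ j, A a j) - (∑ j, A b j))
      + t^2*(A a a - 2*A a b + A b b) := by
  have hcol : ∀ j i, A i j = A j i := fun j i => (Matrix.IsSymm.apply hsym i j).symm
  have key : ∀ i, ∑ j, A i j * ((if j = a then 1+t else if j = b then 1-t else 1))
      = (∑ j, A i j) + t * (A i a - A i b) := by
    intro i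
    have h : ∀ j, A i j * ((if j = a then 1+t else if j = b then 1-t else 1))
        = A i j + t * ((if j = a then A i j else 0) - (if j = b then A i j else 0)) := by
      intro j
      rcases eq_or_ne j a with h1 | h1
      · subst h1; simp [hab]; try ring
      · rcases eq_or_ne j b with h2 | h2
        · subst h2; simp [h1]; try ring
        · simp [h1, h2]; try ring
    simp only [h, Finset.sum_add_distrib, Finset.sum_sub_distrib, ← Finset.mul_sum,
      Finset.sum_ite_eq', Finset.mem_univ, if_true]
  have step : ∀ i, ∑ j, A i j * ((if i = a then 1+t else if i = b then 1-t else 1))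
      * ((if j = a then 1+t else if j = b then 1-t else 1))
      = ((if i = a then 1+t else if i = b then 1-t else 1)) *
        ((∑ j, A i j) + t * (A i a - A i b)) := by
    intro i
    rw [← key i, Finset.mul_sum]
    exact Finset.sum_congr rfl fun j _ => by ring
  simp only [step]
  have h2 : ∀ i, ((if i = a then 1+t else if i = b then 1-t else 1)) *
        ((∑ j, A i j) + t * (A i a - A i b))
      = ((∑ j, A i j) + t * (A i a - A i b))
        + t * ((if i = a then (∑ j, A a j) + t * (A a a - A a b) else 0)
             - (if i = b then (∑ j, A b j) + t * (A b a - A b b) else 0)) := by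
    intro i
    rcases eq_or_ne i a with h1 | h1
    · subst h1; simp [hab]; try ring
    · rcases eq_or_ne i b with h2 | h2
      · subst h2; simp [h1]; try ring
      · simp [h1, h2]; try ring
  simp only [h2, Finset.sum_add_distrib, Finset.sum_sub_distrib, ← Finset.mul_sum,
    Finset.sum_ite_eq', Finset.mem_univ, if_true]
  rw [hcol a b]
  have hca : ∑ i, A i a = ∑ j, A a j := Finset.sum_congr rfl fun i _ => hcol a i
  have hcb : ∑ i, A i b = ∑ j, A b j := Finset.sum_congr rfl fun i _ => hcol b i
  rw [hca, hcb]
  ring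

private theorem aux17_norm (n : ℕ) (p : ℝ) (a b : Fin n) (hab : a ≠ b) (t : ℝ)
    (h1 : 0 ≤ 1 + t) (h2 : 0 ≤ 1 - t) :
    ∑ i, |(if i = a then 1+t else if i = b then 1-t else 1 : ℝ)| ^ p
      = (n:ℝ) - 2 + (1+t)^p + (1-t)^p := by
  have h : ∀ i : Fin n, |(if i = a then 1+t else if i = b then 1-t else 1 : ℝ)| ^ p
      = 1 + (if i = a then (1+t)^p - 1 else 0) + (if i = b then (1-t)^p - 1 else 0) := by
    intro i
    rcases eq_or_ne i a with ha | ha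
    · subst ha; simp [hab, abs_of_nonneg h1]
    · rcases eq_or_ne i b with hb | hb
      · subst hb; simp [ha, abs_of_nonneg h2]
      · simp [ha, hb]
  simp only [h, Finset.sum_add_distrib, Finset.sum_ite_eq', Finset.mem_univ, if_true,
    Finset.sum_const, Finset.card_univ, Fintype.card_fin, nsmul_eq_mul, mul_one]
  ring

private theorem aux17_mem (n : ℕ) (p : ℝ) (hp : 1 < p) (A : Matrix (Fin n) (Fin n) ℝ)
    (hsym : A.IsSymm) (a b : Fin n) (hab : a ≠ b) (t : ℝ) (ht1 : -1 ≤ t) (ht2 : t ≤ 1) :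
    |(∑ i, ∑ j, A i j) + 2*t*((∑ j, A a j) - (∑ j, A b j))
        + t^2*(A a a - 2*A a b + A b b)|
      / ((n:ℝ) - 2 + (1+t)^p + (1-t)^p) ^ (2/p)
    ∈ {t : ℝ | ∃ x : Fin n → ℝ, (∑ i, |x i| ^ p) = 1 ∧
        t = |∑ i, ∑ j, A i j * x i * x j|} := by
  have hp0 : 0 < p := lt_trans zero_lt_one hp
  have hn : 2 ≤ n := by
    have : 1 < Fintype.card (Fin n) := Fintype.one_lt_card_iff_nontrivial.2 ⟨a, b, hab⟩
    simp at this; omega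
  have h1t : 0 ≤ 1 + t := by linarith
  have h2t : 0 ≤ 1 - t := by linarith
  set N : ℝ := (n:ℝ) - 2 + (1+t)^p + (1-t)^p with hNdef
  have hNpos : 0 < N := by
    have hn2 : (0:ℝ) ≤ (n:ℝ) - 2 := by
      have : (2:ℝ) ≤ (n:ℝ) := by exact_mod_cast hn
      linarith
    rcases lt_or_eq_of_le ht2 with h | h
    · have hA : 0 < (1 - t) ^ p := Real.rpow_pos_of_pos (by linarith) p
      have hB : 0 ≤ (1 + t) ^ p := Real.rpow_nonneg h1t p
      rw [hNdef]; positivity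
    · have hA : 0 < (1 + t) ^ p := Real.rpow_pos_of_pos (by linarith) p
      have hB : 0 ≤ (1 - t) ^ p := Real.rpow_nonneg h2t p
      rw [hNdef]; positivity
  set M : ℝ := N ^ (1/p) with hMdef
  have hMpos : 0 < M := Real.rpow_pos_of_pos hNpos _
  have hMp : M ^ p = N := by
    rw [hMdef, ← Real.rpow_mul hNpos.le, one_div, inv_mul_cancel₀ (ne_of_gt hp0),
      Real.rpow_one]
  have hMM : M * M = N ^ (2/p) := by
    rw [hMdef, ← Real.rpow_add hNpos]; ring_nf
  set y : Fin n → ℝ := fun i => (if i = a then 1+t else if i = b then 1-t else 1) with hy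
  refine ⟨fun i => y i / M, ?_, ?_⟩
  · have : ∀ i, |y i / M| ^ p = |y i| ^ p / N := by
      intro i
      rw [abs_div, abs_of_pos hMpos, Real.div_rpow (abs_nonneg _) hMpos.le, hMp]
    simp only [this, ← Finset.sum_div]
    simp only [hy]
    rw [aux17_norm n p a b hab t h1t h2t]
    exact div_self (ne_of_gt hNpos)
  · have hterm : ∀ i j, A i j * (y i / M) * (y j / M) = A i j * y i * y j / (M * M) := by
      intro i j; field_simp; try ring
    simp only [hterm, ← Finset.sum_div]
    simp only [hy]
    rw [aux17_quad n A hsym a b hab t, hMM, abs_div,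
      abs_of_pos (Real.rpow_pos_of_pos hNpos (2/p))]

private theorem aux17_deriv (n : ℕ) (p s d c : ℝ) (hp : 1 < p) (hn : 2 ≤ n) (hd : 0 < d) :
    ∃ L : ℝ, 0 < L ∧ HasDerivAt (fun t : ℝ =>
      (s + 2*t*d + t^2*c) / (((n:ℝ) - 2 + (1+t)^p + (1-t)^p) ^ (2/p))) L 0 := by
  have hp0 : 0 < p := lt_trans zero_lt_one hp
  have hn2 : (2:ℝ) ≤ (n:ℝ) := by exact_mod_cast hn
  have h1 : HasDerivAt (fun t : ℝ => 1 + t) 1 0 := by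
    simpa using (hasDerivAt_id (0:ℝ)).const_add 1
  have h2 : HasDerivAt (fun t : ℝ => 1 - t) (-1) 0 := by
    exact (hasDerivAt_id' (0:ℝ)).const_sub 1
  have h1p : HasDerivAt (fun t : ℝ => (1+t)^p) (1 * p * (1+(0:ℝ))^(p-1)) 0 :=
    h1.rpow_const (Or.inr hp.le)
  have h2p : HasDerivAt (fun t : ℝ => (1-t)^p) ((-1) * p * (1-(0:ℝ))^(p-1)) 0 :=
    h2.rpow_const (Or.inr hp.le)
  have hN : HasDerivAt (fun t : ℝ => (n:ℝ) - 2 + (1+t)^p + (1-t)^p) 0 0 := by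
    have := ((h1p.const_add ((n:ℝ) - 2)).add h2p)
    exact this.congr_deriv (by norm_num)
  have hNpos : (0:ℝ) < (n:ℝ) - 2 + (1+(0:ℝ))^p + (1-(0:ℝ))^p := by
    have e1 : ((1:ℝ)+(0:ℝ))^p = 1 := by norm_num
    have e2 : ((1:ℝ)-(0:ℝ))^p = 1 := by norm_num
    rw [e1, e2]; linarith
  have hD : HasDerivAt (fun t : ℝ => ((n:ℝ) - 2 + (1+t)^p + (1-t)^p) ^ (2/p)) 0 0 := by
    have := hN.rpow_const (p := 2/p) (Or.inl (ne_of_gt hNpos))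
    convert this using 1; ring
  have hq2 : HasDerivAt (fun t : ℝ => t^2*c) 0 0 := by
    have := (hasDerivAt_pow 2 (0:ℝ)).mul_const c
    exact this.congr_deriv (by norm_num)
  have hq1 : HasDerivAt (fun t : ℝ => s + 2*t*d) (2*d) 0 := by
    have := (((hasDerivAt_id (0:ℝ)).const_mul 2).mul_const d).const_add s
    exact this.congr_deriv (by ring)
  have hQ : HasDerivAt (fun t : ℝ => s + 2*t*d + t^2*c) (2*d) 0 := by
    have := hq1.add hq2
    exact this.congr_deriv (by ring)
  have hDne : ((n:ℝ) - 2 + (1+(0:ℝ))^p + (1-(0:ℝ))^p) ^ (2/p) ≠ 0 :=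
    ne_of_gt (Real.rpow_pos_of_pos hNpos _)
  have hf := hQ.div hD hDne
  refine ⟨_, ?_, hf⟩
  have hpos : 0 < ((n:ℝ) - 2 + (1+(0:ℝ))^p + (1-(0:ℝ))^p) ^ (2/p) :=
    Real.rpow_pos_of_pos hNpos _
  have e : (2*d * ((n:ℝ) - 2 + (1+(0:ℝ))^p + (1-(0:ℝ))^p) ^ (2/p)
      - (s + 2*(0:ℝ)*d + (0:ℝ)^2*c) * 0) / (((n:ℝ) - 2 + (1+(0:ℝ))^p + (1-(0:ℝ))^p) ^ (2/p))^2
      = 2*d / (((n:ℝ) - 2 + (1+(0:ℝ))^p + (1-(0:ℝ))^p) ^ (2/p)) := by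
    rw [mul_zero, sub_zero, sq, mul_div_mul_right _ _ hDne]
  rw [e]
  positivity

private theorem aux17_key (n : ℕ) (p : ℝ) (hp : 1 < p)
    (A : Matrix (Fin n) (Fin n) ℝ) (hsym : A.IsSymm)
    (heq : sSup {t : ℝ | ∃ x : Fin n → ℝ, (∑ i, |x i| ^ p) = 1 ∧
        t = |∑ i, ∑ j, A i j * x i * x j|} =
      (n : ℝ) ^ (-(2 / p)) * |∑ i, ∑ j, A i j|)
    (a b : Fin n) (hab : a ≠ b) (σ : ℝ) (hσ : σ = 1 ∨ σ = -1)
    (hσs : σ * (∑ i, ∑ j, A i j) = |∑ i, ∑ j, A i j|) :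
    σ * ((∑ j, A a j) - (∑ j, A b j)) ≤ 0 := by
  by_contra hcon
  push_neg at hcon
  have hp0 : 0 < p := lt_trans zero_lt_one hp
  have hn : 2 ≤ n := by
    have : 1 < Fintype.card (Fin n) := Fintype.one_lt_card_iff_nontrivial.2 ⟨a, b, hab⟩
    simp at this; omega
  have hn2 : (2:ℝ) ≤ (n:ℝ) := by exact_mod_cast hn
  set s : ℝ := ∑ i, ∑ j, A i j with hs
  set d : ℝ := (∑ j, A a j) - (∑ j, A b j) with hd
  set c : ℝ := A a a - 2*A a b + A b b with hc
  obtain ⟨L, hL, hf⟩ := aux17_deriv n p (σ*s) (σ*d) (σ*c) hp hn hcon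
  obtain ⟨t, ht0, ht1, hlt⟩ := aux17_exists_gt _ L hL hf
  set N : ℝ := (n:ℝ) - 2 + (1+t)^p + (1-t)^p with hN
  have hNpos : 0 < N := by
    have e1 : 0 < (1+t)^p := Real.rpow_pos_of_pos (by linarith) p
    have e2 : 0 < (1-t)^p := Real.rpow_pos_of_pos (by linarith) p
    rw [hN]; linarith
  have hDpos : 0 < N ^ (2/p) := Real.rpow_pos_of_pos hNpos _
  -- value of f at 0
  have hbase : (n:ℝ) - 2 + (1+(0:ℝ))^p + (1-(0:ℝ))^p = (n:ℝ) := by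
    have e1 : ((1:ℝ)+(0:ℝ))^p = 1 := by norm_num
    have e2 : ((1:ℝ)-(0:ℝ))^p = 1 := by norm_num
    rw [e1, e2]; ring
  have hf0 : (σ*s + 2*(0:ℝ)*(σ*d) + (0:ℝ)^2*(σ*c)) /
      (((n:ℝ) - 2 + (1+(0:ℝ))^p + (1-(0:ℝ))^p) ^ (2/p))
      = (n : ℝ) ^ (-(2 / p)) * |s| := by
    rw [hbase, ← hσs]
    rw [Real.rpow_neg (by positivity : (0:ℝ) ≤ (n:ℝ))]
    field_simp
    ring
  -- the member value
  have hmem := aux17_mem n p hp A hsym a b hab t (by linarith) (by linarith)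
  have hle : |s + 2*t*d + t^2*c| / N ^ (2/p) ≤ (n : ℝ) ^ (-(2 / p)) * |s| := by
    rw [← heq]
    exact le_csSup (aux17_bdd n p hp A) hmem
  have hft : (σ*s + 2*t*(σ*d) + t^2*(σ*c)) / N ^ (2/p) ≤ |s + 2*t*d + t^2*c| / N ^ (2/p) := by
    rw [div_le_div_iff_of_pos_right hDpos]
    have e : σ*s + 2*t*(σ*d) + t^2*(σ*c) = σ * (s + 2*t*d + t^2*c) := by ring
    rw [e]
    rcases hσ with h | h
    · rw [h, one_mul]; exact le_abs_self _
    · rw [h]; rw [neg_one_mul]; exact neg_le_abs _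
  rw [hf0] at hlt
  linarith

/-- If η^{(p)}(A) = n^{-2/p}|ΣA| for a real symmetric matrix A
and p > 1, then A has constant row sums. -/
theorem stmt_17 (n : ℕ) (p : ℝ) (hp : 1 < p)
    (A : Matrix (Fin n) (Fin n) ℝ) (hsym : A.IsSymm)
    (heq : sSup {t : ℝ | ∃ x : Fin n → ℝ, (∑ i, |x i| ^ p) = 1 ∧
        t = |∑ i, ∑ j, A i j * x i * x j|} =
      (n : ℝ) ^ (-(2 / p)) * |∑ i, ∑ j, A i j|) :
    ∀ i i', ∑ j, A i j = ∑ j, A i' j := by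
  intro i i'
  rcases eq_or_ne i i' with h | hne
  · rw [h]
  have hn : 2 ≤ n := by
    have : 1 < Fintype.card (Fin n) := Fintype.one_lt_card_iff_nontrivial.2 ⟨i, i', hne⟩
    simp at this; omega
  have hn2 : (2:ℝ) ≤ (n:ℝ) := by exact_mod_cast hn
  rcases lt_trichotomy (∑ i, ∑ j, A i j) 0 with hs | hs | hs
  · -- s < 0 : use σ = -1
    have hσs : (-1 : ℝ) * (∑ i, ∑ j, A i j) = |∑ i, ∑ j, A i j| := by
      rw [abs_of_neg hs]; ring
    have h1 := aux17_key n p hp A hsym heq i i' hne (-1) (Or.inr rfl) hσs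
    have h2 := aux17_key n p hp A hsym heq i' i hne.symm (-1) (Or.inr rfl) hσs
    linarith
  · -- s = 0
    have h0 : sSup {t : ℝ | ∃ x : Fin n → ℝ, (∑ i, |x i| ^ p) = 1 ∧
        t = |∑ i, ∑ j, A i j * x i * x j|} = 0 := by
      rw [heq, hs, abs_zero, mul_zero]
    have hbdd := aux17_bdd n p hp A
    have hnum : ∀ t : ℝ, -1 ≤ t → t ≤ 1 →
        0 < ((n:ℝ) - 2 + (1+t)^p + (1-t)^p) →
        (∑ i, ∑ j, A i j) + 2*t*((∑ j, A i j) - (∑ j, A i' j))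
          + t^2*(A i i - 2*A i i' + A i' i') = 0 := by
      intro t ht1 ht2 hNpos
      have hmem := aux17_mem n p hp A hsym i i' hne t ht1 ht2
      have hle := le_csSup hbdd hmem
      rw [h0] at hle
      have hDpos : 0 < ((n:ℝ) - 2 + (1+t)^p + (1-t)^p) ^ (2/p) :=
        Real.rpow_pos_of_pos hNpos _
      have hge : 0 ≤ |(∑ i, ∑ j, A i j) + 2*t*((∑ j, A i j) - (∑ j, A i' j))
          + t^2*(A i i - 2*A i i' + A i' i')| / ((n:ℝ) - 2 + (1+t)^p + (1-t)^p) ^ (2/p) :=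
        div_nonneg (abs_nonneg _) hDpos.le
      have hz : |(∑ i, ∑ j, A i j) + 2*t*((∑ j, A i j) - (∑ j, A i' j))
          + t^2*(A i i - 2*A i i' + A i' i')| / ((n:ℝ) - 2 + (1+t)^p + (1-t)^p) ^ (2/p) = 0 :=
        le_antisymm hle hge
      rw [div_eq_zero_iff] at hz
      rcases hz with hz | hz
      · exact abs_eq_zero.1 hz
      · exact absurd hz (ne_of_gt hDpos)
    have hNp : ∀ t : ℝ, -1 < t → t < 1 → 0 < ((n:ℝ) - 2 + (1+t)^p + (1-t)^p) := by
      intro t h1 h2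
      have e1 : 0 < (1+t)^p := Real.rpow_pos_of_pos (by linarith) p
      have e2 : 0 < (1-t)^p := Real.rpow_pos_of_pos (by linarith) p
      linarith
    have hA := hnum (1/2) (by norm_num) (by norm_num) (hNp (1/2) (by norm_num) (by norm_num))
    have hB := hnum (-(1/2)) (by norm_num) (by norm_num) (hNp (-(1/2)) (by norm_num) (by norm_num))
    nlinarith [hA, hB]
  · -- s > 0 : use σ = 1
    have hσs : (1 : ℝ) * (∑ i, ∑ j, A i j) = |∑ i, ∑ j, A i j| := by
      rw [abs_of_pos hs]; ring
    have h1 := aux17_key n p hp A hsym heq i i' hne 1 (Or.inl rfl) hσs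
    have h2 := aux17_key n p hp A hsym heq i' i hne.symm 1 (Or.inl rfl) hσs
    linarith
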